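/- If S < ∞, then there exists a constant C > 0 such that h(z) ≤ C (f(z)² + 1) for all z ∈ (0,S). -/

import Mathlib

open MeasureTheory Set Filter Topology

/-- Concavity lower bound: if `m` is concave on a set and `a ≤ x ≤ y` with `a,y` in the set,
then `((y-x)/(y-a)) * m a + ((x-a)/(y-a)) * m y ≤ m x`. -/
lemma concave_chord_le {s : Set ℝ} {m : ℝ → ℝ} (hc : ConcaveOn ℝ s m)
    {a x y : ℝ} (ha : a ∈ s) (hy : y ∈ s) (hax : a ≤ x) (hxy : x ≤ y) (hay : a < y) :
    ((y - x) / (y - a)) * m a + ((x - a) / (y - a)) * m y ≤ m x := by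
  have hya : (0:ℝ) < y - a := by linarith
  have h1 : (0:ℝ) ≤ (y - x) / (y - a) := div_nonneg (by linarith) hya.le
  have h2 : (0:ℝ) ≤ (x - a) / (y - a) := div_nonneg (by linarith) hya.le
  have h3 : (y - x) / (y - a) + (x - a) / (y - a) = 1 := by
    field_simp
    ring
  have h4 : ((y - x) / (y - a)) • a + ((x - a) / (y - a)) • y = x := by
    rw [smul_eq_mul, smul_eq_mul, div_mul_eq_mul_div, div_mul_eq_mul_div, ← add_div,
      div_eq_iff hya.ne']
    ring
  have := hc.2 ha hy h1 h2 h3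
  rw [h4] at this
  simpa using this

/-- For `S < ∞` and `m` satisfying (M) on `(0,S)`, with
`f(z) := ∫₀^z √(2/m(r)) dr` and `h(z) := ∫_{s₀}^z (z−r)/m(r) dr`, there exists `C > 0`
such that `h(z) ≤ C (f(z)² + 1)` for all `z ∈ (0,S)`. -/
theorem h_le_C_fsq_plus_one
    (S : ℝ) (hS : 0 < S) (m : ℝ → ℝ)
    (hm_c2 : ContDiffOn ℝ 2 m (Ioo 0 S))
    (hm_pos : ∀ z ∈ Ioo (0 : ℝ) S, 0 < m z)
    (hm_conc : ∀ z ∈ Ioo (0 : ℝ) S, deriv (deriv m) z ≤ 0)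
    (hm0 : Tendsto m (𝓝[>] (0 : ℝ)) (𝓝 0))
    (hmS : Tendsto m (𝓝[<] S) (𝓝 0))
    (s₀ : ℝ) (hs₀ : s₀ ∈ Ioo (0 : ℝ) S) :
    ∃ C : ℝ, 0 < C ∧ ∀ z ∈ Ioo (0 : ℝ) S,
      (∫ r in s₀..z, (z - r) / m r) ≤
        C * ((∫ r in Ioo (0 : ℝ) z, Real.sqrt (2 / m r)) ^ 2 + 1) := by
  obtain ⟨hs₀0, hs₀S⟩ := hs₀
  have hms₀ : 0 < m s₀ := hm_pos s₀ ⟨hs₀0, hs₀S⟩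
  -- concavity of m on (0,S)
  have hint : interior (Ioo (0:ℝ) S) = Ioo 0 S := interior_Ioo
  have hconc : ConcaveOn ℝ (Ioo (0:ℝ) S) m := by
    apply concaveOn_of_deriv2_nonpos (convex_Ioo 0 S) (hm_c2.continuousOn)
    · rw [hint]; exact hm_c2.differentiableOn (by norm_num)
    · rw [hint]
      exact (ContDiffOn.deriv_of_isOpen (m := 1) hm_c2 isOpen_Ioo (by norm_num)).differentiableOn
        (by norm_num)
    · rw [hint]
      intro x hx
      have : deriv^[2] m x = deriv (deriv m) x := by
        simp [Function.iterate_succ, Function.iterate_zero, Function.comp]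
      rw [this]
      exact hm_conc x hx
  set K : ℝ := 2 * S / m s₀ with hK
  have hKpos : 0 < K := by positivity
  refine ⟨K * S + 1, by positivity, ?_⟩
  intro z hz
  obtain ⟨hz0, hzS⟩ := hz
  -- pointwise bound on the integrand over the relevant interval
  have hbound : ∀ r ∈ Set.uIoc s₀ z, ‖(z - r) / m r‖ ≤ K := by
    intro r hr
    rcases le_or_gt s₀ z with hle | hlt
    · -- z ≥ s₀, r ∈ (s₀, z]
      rw [Set.uIoc_of_le hle] at hr
      obtain ⟨hr1, hr2⟩ := hr
      have hrIoo : r ∈ Ioo (0:ℝ) S := ⟨lt_trans hs₀0 hr1, lt_of_le_of_lt hr2 hzS⟩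
      have hmr : 0 < m r := hm_pos r hrIoo
      set b : ℝ := (z + S) / 2 with hb
      have hbIoo : b ∈ Ioo (0:ℝ) S := ⟨by simp only [hb]; linarith, by simp only [hb]; linarith⟩
      have hrb : r ≤ b := by simp only [hb]; linarith
      have hchord := concave_chord_le hconc ⟨hs₀0, hs₀S⟩ hbIoo hr1.le hrb
        (by simp only [hb]; linarith)
      have hmb : 0 < m b := hm_pos b hbIoo
      have hlow : ((b - r) / (b - s₀)) * m s₀ ≤ m r := by
        have hbs : (0:ℝ) < b - s₀ := by simp only [hb]; linarith
        have h2 : 0 ≤ ((r - s₀) / (b - s₀)) * m b :=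
          mul_nonneg (div_nonneg (by linarith) hbs.le) hmb.le
        linarith
      rw [Real.norm_eq_abs, abs_div, abs_of_nonneg (by linarith : (0:ℝ) ≤ z - r),
        abs_of_pos hmr, div_le_iff₀ hmr]
      have hbs : (0:ℝ) < b - s₀ := by simp only [hb]; linarith
      have hbr : (z - r) / 2 ≤ b - r := by simp only [hb]; linarith
      have hKm : K * (((b - r) / (b - s₀)) * m s₀) ≤ K * m r :=
        mul_le_mul_of_nonneg_left hlow hKpos.le
      refine le_trans ?_ hKm
      have key : K * (((b - r) / (b - s₀)) * m s₀) = 2 * S * (b - r) / (b - s₀) := by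
        rw [hK]; field_simp
      rw [key, le_div_iff₀ hbs]
      have h1 : b - s₀ ≤ S := by simp only [hb]; linarith
      have h3 : (0:ℝ) ≤ z - r := by linarith
      nlinarith [mul_le_mul_of_nonneg_left h1 h3]
    · -- z < s₀, r ∈ (z, s₀]
      rw [Set.uIoc_of_ge hlt.le] at hr
      obtain ⟨hr1, hr2⟩ := hr
      have hrIoo : r ∈ Ioo (0:ℝ) S := ⟨lt_trans hz0 hr1, lt_of_le_of_lt hr2 hs₀S⟩
      have hmr : 0 < m r := hm_pos r hrIoo
      set a : ℝ := z / 2 with ha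
      have haIoo : a ∈ Ioo (0:ℝ) S := ⟨by simp only [ha]; linarith, by simp only [ha]; linarith⟩
      have har : a ≤ r := by simp only [ha]; linarith
      have hchord := concave_chord_le hconc haIoo ⟨hs₀0, hs₀S⟩ har hr2
        (by simp only [ha]; linarith)
      have hma : 0 < m a := hm_pos a haIoo
      have hsa : (0:ℝ) < s₀ - a := by simp only [ha]; linarith
      have hlow : ((r - a) / (s₀ - a)) * m s₀ ≤ m r := by
        have h2 : 0 ≤ ((s₀ - r) / (s₀ - a)) * m a :=
          mul_nonneg (div_nonneg (by linarith) hsa.le) hma.le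
        linarith
      rw [Real.norm_eq_abs, abs_div, abs_of_nonpos (by linarith : z - r ≤ 0),
        abs_of_pos hmr, div_le_iff₀ hmr]
      have hKm : K * (((r - a) / (s₀ - a)) * m s₀) ≤ K * m r :=
        mul_le_mul_of_nonneg_left hlow hKpos.le
      refine le_trans ?_ hKm
      have key : K * (((r - a) / (s₀ - a)) * m s₀) = 2 * S * (r - a) / (s₀ - a) := by
        rw [hK]; field_simp
      rw [key, le_div_iff₀ hsa]
      have h1 : s₀ - a ≤ S := by simp only [ha]; linarith
      have h3 : (0:ℝ) ≤ r - z := by linarith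
      nlinarith [mul_le_mul_of_nonneg_left h1 h3]
  have hnorm := intervalIntegral.norm_integral_le_of_norm_le_const hbound
  have h1 : (∫ r in s₀..z, (z - r) / m r) ≤ K * |z - s₀| :=
    le_trans (le_abs_self _) hnorm
  have h2 : |z - s₀| ≤ S := by
    rw [abs_sub_le_iff]; constructor <;> linarith
  have hsq : (0:ℝ) ≤ (∫ r in Ioo (0 : ℝ) z, Real.sqrt (2 / m r)) ^ 2 := sq_nonneg _
  calc (∫ r in s₀..z, (z - r) / m r) ≤ K * |z - s₀| := h1
    _ ≤ K * S := mul_le_mul_of_nonneg_left h2 hKpos.le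
    _ ≤ (K * S + 1) * 1 := by linarith
    _ ≤ (K * S + 1) * ((∫ r in Ioo (0 : ℝ) z, Real.sqrt (2 / m r)) ^ 2 + 1) := by
        have : (0:ℝ) < K * S + 1 := by positivity
        exact mul_le_mul_of_nonneg_left (by linarith) this.le
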